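/- Let R̃_1, …, R̃_N be dyadic rectangles in ℝ^2 (products of dyadic intervals) with long side in the x₁-direction, ordered so that the lengths |P₁(R̃_i)| of their first-coordinate projections are non-increasing, and satisfying |R̃_i ∩ ⋃_{j<i} R̃_j| < (1/3)|R̃_i| for i = 2, …, N. Then for each i and each integer n ≥ 1, the set X_{i,n} = {x ∈ R̃_i : Σ_{j=1}^i 𝟙_{R̃_j}(x) ≥ n} satisfies |X_{i,n}| ≤ 3^{1−n}|R̃_i|. -/

import Mathlib

open MeasureTheory Set
open scoped ENNReal Classical

noncomputable section

/-- The dyadic interval `[m·2^k, (m+1)·2^k)`. -/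
def dInt (m k : ℤ) : Set ℝ := Set.Ico ((m : ℝ) * 2 ^ k) (((m : ℝ) + 1) * 2 ^ k)

lemma two_zpow_pos' (k : ℤ) : (0:ℝ) < 2 ^ k := zpow_pos (by norm_num) k

lemma dInt_nonempty (m k : ℤ) : (dInt m k).Nonempty := by
  refine ⟨(m:ℝ) * 2 ^ k, le_refl _, ?_⟩
  have := two_zpow_pos' k; nlinarith

lemma volume_dInt (m k : ℤ) : volume (dInt m k) = ENNReal.ofReal (2 ^ k) := by
  rw [dInt, Real.volume_Ico]; ring_nf

lemma volume_dInt_ne_zero (m k : ℤ) : volume (dInt m k) ≠ 0 := by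
  rw [volume_dInt]
  exact ne_of_gt (ENNReal.ofReal_pos.mpr (two_zpow_pos' k))

lemma volume_dInt_ne_top (m k : ℤ) : volume (dInt m k) ≠ ⊤ := by
  rw [volume_dInt]; exact ENNReal.ofReal_ne_top

lemma measurableSet_dInt (m k : ℤ) : MeasurableSet (dInt m k) := measurableSet_Ico

lemma dInt_subset {m k m' k' : ℤ} (h : k ≤ k')
    (hne : (dInt m k ∩ dInt m' k').Nonempty) : dInt m k ⊆ dInt m' k' := by
  obtain ⟨x, hx1, hx2⟩ := hne
  have h2k : (0:ℝ) < 2 ^ k := two_zpow_pos' k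
  set D : ℤ := 2 ^ (k' - k).toNat with hD
  have hsplit : (2:ℝ) ^ k' = 2 ^ k * (D : ℝ) := by
    rw [hD]
    push_cast
    rw [← zpow_natCast (2:ℝ) (k'-k).toNat, Int.toNat_of_nonneg (by omega),
      ← zpow_add₀ (by norm_num : (2:ℝ) ≠ 0)]
    ring_nf
  have hA : m' * D ≤ m := by
    have h1 : (m':ℝ) * 2 ^ k' < ((m:ℝ)+1) * 2 ^ k := lt_of_le_of_lt hx2.1 hx1.2
    rw [hsplit] at h1
    have h2 : ((m' * D : ℤ) : ℝ) < ((m:ℝ)+1) := by push_cast; nlinarith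
    have h3 : (m' * D : ℤ) < m + 1 := by exact_mod_cast h2
    omega
  have hB : m + 1 ≤ (m' + 1) * D := by
    have h1 : (m:ℝ) * 2 ^ k < ((m':ℝ)+1) * 2 ^ k' := lt_of_le_of_lt hx1.1 hx2.2
    rw [hsplit] at h1
    have h2 : (m:ℝ) < (((m' + 1) * D : ℤ) : ℝ) := by push_cast; nlinarith
    have h3 : m < (m' + 1) * D := by exact_mod_cast h2
    omega
  intro y hy
  constructor
  · calc (m':ℝ) * 2 ^ k' = ((m' * D : ℤ):ℝ) * 2 ^ k := by rw [hsplit]; push_cast; ring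
    _ ≤ (m:ℝ) * 2 ^ k := by
        have : ((m' * D : ℤ):ℝ) ≤ (m:ℝ) := by exact_mod_cast hA
        nlinarith
    _ ≤ y := hy.1
  · calc y < ((m:ℝ)+1) * 2 ^ k := hy.2
    _ ≤ (((m' + 1) * D : ℤ):ℝ) * 2 ^ k := by
        have : ((m:ℝ)+1) ≤ (((m' + 1) * D : ℤ):ℝ) := by exact_mod_cast hB
        nlinarith
    _ = ((m':ℝ)+1) * 2 ^ k' := by rw [hsplit]; push_cast; ring

section Main

variable {N : ℕ} {a b : Fin N → ℤ × ℤ} {R : Fin N → Set (ℝ × ℝ)}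

/-- A later selected rectangle is never contained in an earlier one. -/
lemma no_containment
    (hsel : ∀ i : Fin N, 0 < (i : ℕ) →
      volume (R i ∩ ⋃ j : {j : Fin N // (j : ℕ) < (i : ℕ)}, R j) < 3⁻¹ * volume (R i))
    {l m : Fin N} (hlm : l < m) (hsub : R m ⊆ R l) : False := by
  have hlm' : (l:ℕ) < (m:ℕ) := hlm
  have h0 : 0 < (m:ℕ) := by omega
  have hs := hsel m h0
  have hsub2 : R m ⊆ R m ∩ ⋃ j : {j : Fin N // (j : ℕ) < (m : ℕ)}, R j := fun x hx =>
    ⟨hx, Set.mem_iUnion.2 ⟨⟨l, hlm'⟩, hsub hx⟩⟩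
  have h1 : volume (R m) ≤ volume (R m ∩ ⋃ j : {j : Fin N // (j : ℕ) < (m : ℕ)}, R j) :=
    measure_mono hsub2
  have h2 : volume (R m) < 3⁻¹ * volume (R m) := lt_of_le_of_lt h1 hs
  have h3 : 3⁻¹ * volume (R m) ≤ 1 * volume (R m) :=
    mul_le_mul_left (by norm_num) _
  rw [one_mul] at h3
  exact absurd (lt_of_lt_of_le h2 h3) (lt_irrefl _)

lemma meet_nonempty_inter
    (hR : ∀ i, R i = dInt (a i).1 (a i).2 ×ˢ dInt (b i).1 (b i).2)
    {l j : Fin N} (hne : (R l ∩ R j).Nonempty) :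
    (dInt (a l).1 (a l).2 ∩ dInt (a j).1 (a j).2).Nonempty ∧
      (dInt (b l).1 (b l).2 ∩ dInt (b j).1 (b j).2).Nonempty := by
  rw [hR l, hR j, Set.prod_inter_prod, Set.prod_nonempty_iff] at hne
  exact hne

/-- If `R l` meets `R j` and `l ≤ j`, then `I j ⊆ I l`. -/
lemma I_subset
    (hR : ∀ i, R i = dInt (a i).1 (a i).2 ×ˢ dInt (b i).1 (b i).2)
    (hmono : ∀ i j : Fin N, i ≤ j → (a j).2 ≤ (a i).2)
    {l j : Fin N} (hlj : l ≤ j) (hne : (R l ∩ R j).Nonempty) :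
    dInt (a j).1 (a j).2 ⊆ dInt (a l).1 (a l).2 :=
  dInt_subset (hmono l j hlj)
    (by rw [Set.inter_comm]; exact (meet_nonempty_inter hR hne).1)

/-- If `R l` meets `R j` and `l < j`, then `J l ⊆ J j`. -/
lemma J_subset
    (hR : ∀ i, R i = dInt (a i).1 (a i).2 ×ˢ dInt (b i).1 (b i).2)
    (hmono : ∀ i j : Fin N, i ≤ j → (a j).2 ≤ (a i).2)
    (hsel : ∀ i : Fin N, 0 < (i : ℕ) →
      volume (R i ∩ ⋃ j : {j : Fin N // (j : ℕ) < (i : ℕ)}, R j) < 3⁻¹ * volume (R i))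
    {l j : Fin N} (hlj : l < j) (hne : (R l ∩ R j).Nonempty) :
    dInt (b l).1 (b l).2 ⊆ dInt (b j).1 (b j).2 := by
  rcases le_total (b l).2 (b j).2 with h | h
  · exact dInt_subset h (meet_nonempty_inter hR hne).2
  · exfalso
    have hJ : dInt (b j).1 (b j).2 ⊆ dInt (b l).1 (b l).2 :=
      dInt_subset h (by rw [Set.inter_comm]; exact (meet_nonempty_inter hR hne).2)
    have hI : dInt (a j).1 (a j).2 ⊆ dInt (a l).1 (a l).2 :=
      I_subset hR hmono (le_of_lt hlj) hne
    have hsub : R j ⊆ R l := by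
      rw [hR l, hR j]; exact Set.prod_mono hI hJ
    exact no_containment hsel hlj hsub

/-- Two distinct rectangles meeting `R j` cannot be nested (the later inside the earlier
in the `J`-direction). -/
lemma J_not_nested
    (hR : ∀ i, R i = dInt (a i).1 (a i).2 ×ˢ dInt (b i).1 (b i).2)
    (hmono : ∀ i j : Fin N, i ≤ j → (a j).2 ≤ (a i).2)
    (hsel : ∀ i : Fin N, 0 < (i : ℕ) →
      volume (R i ∩ ⋃ j : {j : Fin N // (j : ℕ) < (i : ℕ)}, R j) < 3⁻¹ * volume (R i))
    {j l m : Fin N} (hlj : l < j) (hmj : m < j)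
    (hnel : (R l ∩ R j).Nonempty) (hnem : (R m ∩ R j).Nonempty)
    (hlm : l < m) (hJ : dInt (b m).1 (b m).2 ⊆ dInt (b l).1 (b l).2) : False := by
  have hIl : dInt (a j).1 (a j).2 ⊆ dInt (a l).1 (a l).2 :=
    I_subset hR hmono (le_of_lt hlj) hnel
  have hIm : dInt (a j).1 (a j).2 ⊆ dInt (a m).1 (a m).2 :=
    I_subset hR hmono (le_of_lt hmj) hnem
  obtain ⟨x, hx⟩ := dInt_nonempty (a j).1 (a j).2
  have hI : dInt (a m).1 (a m).2 ⊆ dInt (a l).1 (a l).2 :=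
    dInt_subset (hmono l m (le_of_lt hlm)) ⟨x, hIm hx, hIl hx⟩
  have hsub : R m ⊆ R l := by rw [hR l, hR m]; exact Set.prod_mono hI hJ
  exact no_containment hsel hlm hsub

/-- The key one-dimensional multiplicity bound, by induction on `n`. -/
lemma key
    (hR : ∀ i, R i = dInt (a i).1 (a i).2 ×ˢ dInt (b i).1 (b i).2)
    (hmono : ∀ i j : Fin N, i ≤ j → (a j).2 ≤ (a i).2)
    (hsel : ∀ i : Fin N, 0 < (i : ℕ) →
      volume (R i ∩ ⋃ j : {j : Fin N // (j : ℕ) < (i : ℕ)}, R j) < 3⁻¹ * volume (R i)) :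
    ∀ (n : ℕ) (j : Fin N),
      volume {y ∈ dInt (b j).1 (b j).2 |
          n ≤ (Finset.univ.filter fun l : Fin N =>
            l < j ∧ (R l ∩ R j).Nonempty ∧ y ∈ dInt (b l).1 (b l).2).card} ≤
        (3 : ℝ≥0∞) ^ (-(n:ℤ)) * volume (dInt (b j).1 (b j).2) := by
  intro n
  induction n with
  | zero =>
    intro j
    simp only [Nat.cast_zero, neg_zero, zpow_zero, one_mul]
    exact measure_mono (Set.sep_subset _ _)
  | succ n ih =>
    intro j
    set J : Fin N → Set ℝ := fun l => dInt (b l).1 (b l).2 with hJdef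
    set C : ℝ → Finset (Fin N) := fun y => Finset.univ.filter fun l : Fin N =>
      l < j ∧ (R l ∩ R j).Nonempty ∧ y ∈ J l with hCdef
    set M : Finset (Fin N) := Finset.univ.filter fun l : Fin N =>
      (l < j ∧ (R l ∩ R j).Nonempty) ∧ ∀ m : Fin N, m < j → (R m ∩ R j).Nonempty →
        (J l ∩ J m).Nonempty → J m ⊆ J l with hMdef
    -- the covering claim
    have hcov : {y ∈ J j | n + 1 ≤ (C y).card} ⊆
        ⋃ l ∈ M, {y ∈ J l | n ≤ (Finset.univ.filter fun m : Fin N =>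
          m < l ∧ (R m ∩ R l).Nonempty ∧ y ∈ J m).card} := by
      rintro y ⟨hyJ, hcard⟩
      have hCne : (C y).Nonempty := Finset.card_pos.mp (by omega)
      obtain ⟨l, hlC, hlmax⟩ := (C y).exists_max_image (fun m => (b m).2) hCne
      have hlC' : l < j ∧ (R l ∩ R j).Nonempty ∧ y ∈ J l :=
        (Finset.mem_filter.mp hlC).2
      obtain ⟨hlj, hlR, hylJ⟩ := hlC'
      have hsubJ : ∀ m ∈ C y, J m ⊆ J l := by
        intro m hm
        obtain ⟨-, -, hym⟩ := (Finset.mem_filter.mp hm).2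
        exact dInt_subset (hlmax m hm) ⟨y, hym, hylJ⟩
      have hltl : ∀ m ∈ C y, m ≠ l → m < l := by
        intro m hm hne
        obtain ⟨hmj, hmR, hym⟩ := (Finset.mem_filter.mp hm).2
        rcases lt_or_gt_of_ne hne with h | h
        · exact h
        · exact absurd (J_not_nested hR hmono hsel hlj hmj hlR hmR h (hsubJ m hm)) id
      -- l belongs to M
      have hlM : l ∈ M := by
        rw [hMdef, Finset.mem_filter]
        refine ⟨Finset.mem_univ _, ⟨hlj, hlR⟩, ?_⟩
        intro m hmj hmR hint
        rcases le_total (b m).2 (b l).2 with h | h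
        · exact dInt_subset h (by rw [Set.inter_comm]; exact hint)
        · have hJlm : J l ⊆ J m := dInt_subset h hint
          have hmC : m ∈ C y := by
            rw [hCdef, Finset.mem_filter]
            exact ⟨Finset.mem_univ _, hmj, hmR, hJlm hylJ⟩
          exact dInt_subset (hlmax m hmC) ⟨y, hJlm hylJ, hylJ⟩
      -- the erased set counts for l
      have herase : (C y).erase l ⊆ Finset.univ.filter fun m : Fin N =>
          m < l ∧ (R m ∩ R l).Nonempty ∧ y ∈ J m := by
        intro m hm
        obtain ⟨hne, hmC⟩ := Finset.mem_erase.mp hm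
        obtain ⟨hmj, hmR, hym⟩ := (Finset.mem_filter.mp hmC).2
        refine Finset.mem_filter.mpr ⟨Finset.mem_univ _, hltl m hmC hne, ?_, hym⟩
        -- R m ∩ R l nonempty
        obtain ⟨x, hx⟩ := dInt_nonempty (a j).1 (a j).2
        have hxm : x ∈ dInt (a m).1 (a m).2 := I_subset hR hmono (le_of_lt hmj) hmR hx
        have hxl : x ∈ dInt (a l).1 (a l).2 := I_subset hR hmono (le_of_lt hlj) hlR hx
        refine ⟨(x, y), ?_, ?_⟩
        · rw [hR m]; exact ⟨hxm, hym⟩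
        · rw [hR l]; exact ⟨hxl, hylJ⟩
      have hcard2 : n ≤ ((C y).erase l).card := by
        rw [Finset.card_erase_of_mem hlC]; omega
      refine Set.mem_iUnion₂.mpr ⟨l, hlM, hylJ, ?_⟩
      exact le_trans hcard2 (Finset.card_le_card herase)
    -- pairwise disjointness of the maximal intervals
    have hdisj : (↑M : Set (Fin N)).PairwiseDisjoint J := by
      intro l hl l' hl' hne
      simp only [Finset.coe_filter, Finset.mem_coe] at hl hl'
      have hlM := Finset.mem_filter.mp hl
      have hl'M := Finset.mem_filter.mp hl'
      obtain ⟨-, ⟨hlj, hlR⟩, hlmax⟩ := hlM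
      obtain ⟨-, ⟨hl'j, hl'R⟩, hl'max⟩ := hl'M
      rw [Function.onFun, Set.disjoint_left]
      intro y hyl hyl'
      have hint : (J l ∩ J l').Nonempty := ⟨y, hyl, hyl'⟩
      have h1 : J l' ⊆ J l := hlmax l' hl'j hl'R hint
      have h2 : J l ⊆ J l' := hl'max l hlj hlR (by rw [Set.inter_comm]; exact hint)
      rcases lt_or_gt_of_ne hne with h | h
      · exact J_not_nested hR hmono hsel hlj hl'j hlR hl'R h h1
      · exact J_not_nested hR hmono hsel hl'j hlj hl'R hlR h h2
    -- the selection bound on the union of maximal intervals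
    have hU : volume (⋃ l ∈ M, J l) ≤ 3⁻¹ * volume (J j) := by
      rcases M.eq_empty_or_nonempty with hM | ⟨l₀, hl₀⟩
      · simp [hM]
      · obtain ⟨-, ⟨hl₀j, -⟩, -⟩ := Finset.mem_filter.mp hl₀
        have h0j : 0 < (j:ℕ) := by
          have : (l₀:ℕ) < (j:ℕ) := hl₀j
          omega
        have hsub : dInt (a j).1 (a j).2 ×ˢ (⋃ l ∈ M, J l) ⊆
            R j ∩ ⋃ j' : {j' : Fin N // (j' : ℕ) < (j : ℕ)}, R j' := by
          rintro ⟨x, y⟩ ⟨hx, hy⟩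
          obtain ⟨l, hlM, hyl⟩ := Set.mem_iUnion₂.mp hy
          obtain ⟨-, ⟨hlj, hlR⟩, -⟩ := Finset.mem_filter.mp hlM
          constructor
          · rw [hR j]
            exact ⟨hx, J_subset hR hmono hsel hlj hlR hyl⟩
          · refine Set.mem_iUnion.mpr ⟨⟨l, hlj⟩, ?_⟩
            rw [hR l]
            exact ⟨I_subset hR hmono (le_of_lt hlj) hlR hx, hyl⟩
        have hle : volume (dInt (a j).1 (a j).2 ×ˢ (⋃ l ∈ M, J l)) ≤
            volume (R j ∩ ⋃ j' : {j' : Fin N // (j' : ℕ) < (j : ℕ)}, R j') :=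
          measure_mono hsub
        have hlt := lt_of_le_of_lt hle (hsel j h0j)
        rw [hR j, MeasureTheory.Measure.volume_eq_prod, MeasureTheory.Measure.prod_prod,
          MeasureTheory.Measure.prod_prod] at hlt
        have hrw : 3⁻¹ * (volume (dInt (a j).1 (a j).2) * volume (J j)) =
            volume (dInt (a j).1 (a j).2) * (3⁻¹ * volume (J j)) := by ring
        rw [hrw] at hlt
        exact le_of_lt ((ENNReal.mul_lt_mul_iff_right (volume_dInt_ne_zero _ _)
          (volume_dInt_ne_top _ _)).mp hlt)
    -- put everything together
    calc volume {y ∈ J j | n + 1 ≤ (C y).card}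
        ≤ volume (⋃ l ∈ M, {y ∈ J l | n ≤ (Finset.univ.filter fun m : Fin N =>
            m < l ∧ (R m ∩ R l).Nonempty ∧ y ∈ J m).card}) := measure_mono hcov
      _ ≤ ∑ l ∈ M, volume {y ∈ J l | n ≤ (Finset.univ.filter fun m : Fin N =>
            m < l ∧ (R m ∩ R l).Nonempty ∧ y ∈ J m).card} := measure_biUnion_finset_le M _
      _ ≤ ∑ l ∈ M, (3 : ℝ≥0∞) ^ (-(n:ℤ)) * volume (J l) :=
          Finset.sum_le_sum fun l _ => ih l
      _ = (3 : ℝ≥0∞) ^ (-(n:ℤ)) * ∑ l ∈ M, volume (J l) := by rw [Finset.mul_sum]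
      _ = (3 : ℝ≥0∞) ^ (-(n:ℤ)) * volume (⋃ l ∈ M, J l) := by
          rw [measure_biUnion_finset hdisj fun l _ => measurableSet_dInt _ _]
      _ ≤ (3 : ℝ≥0∞) ^ (-(n:ℤ)) * (3⁻¹ * volume (J j)) := mul_le_mul_right hU _
      _ = (3 : ℝ≥0∞) ^ (-((n+1 : ℕ):ℤ)) * volume (J j) := by
          rw [← mul_assoc]
          congr 1
          have h1 : (-((n+1 : ℕ):ℤ)) = (-(n:ℤ)) + (-1) := by push_cast; ring
          rw [h1, ENNReal.zpow_add (by norm_num) (by norm_num), zpow_neg_one]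

end Main

theorem dyadic_multiplicity_bound (N : ℕ) (a b : Fin N → ℤ × ℤ)
    (R : Fin N → Set (ℝ × ℝ))
    (hR : ∀ i, R i = dInt (a i).1 (a i).2 ×ˢ dInt (b i).1 (b i).2)
    (hlong : ∀ i, (b i).2 ≤ (a i).2)
    (hmono : ∀ i j : Fin N, i ≤ j → (a j).2 ≤ (a i).2)
    (hsel : ∀ i : Fin N, 0 < (i : ℕ) →
      volume (R i ∩ ⋃ j : {j : Fin N // (j : ℕ) < (i : ℕ)}, R j) < 3⁻¹ * volume (R i)) :
    ∀ (i : Fin N) (n : ℕ), 1 ≤ n →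
      volume {x ∈ R i |
          n ≤ (Finset.univ.filter fun j : Fin N => j ≤ i ∧ x ∈ R j).card} ≤
        (3 : ℝ≥0∞) ^ (1 - (n : ℤ)) * volume (R i) := by
  intro i n hn
  have hkey := key hR hmono hsel (n - 1) i
  -- rewrite the set as a product
  have hfil : ∀ x : ℝ × ℝ, x ∈ R i →
      (Finset.univ.filter fun j : Fin N => j ≤ i ∧ x ∈ R j) =
        insert i (Finset.univ.filter fun l : Fin N =>
          l < i ∧ (R l ∩ R i).Nonempty ∧ x.2 ∈ dInt (b l).1 (b l).2) := by
    intro x hx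
    have hxI : x.1 ∈ dInt (a i).1 (a i).2 ∧ x.2 ∈ dInt (b i).1 (b i).2 := by
      rw [hR i] at hx; exact hx
    ext j
    simp only [Finset.mem_filter, Finset.mem_insert, Finset.mem_univ, true_and]
    constructor
    · rintro ⟨hji, hmem⟩
      rcases lt_or_eq_of_le hji with h | h
      · right
        have hmem' : x.1 ∈ dInt (a j).1 (a j).2 ∧ x.2 ∈ dInt (b j).1 (b j).2 := by
          rw [hR j] at hmem; exact hmem
        exact ⟨h, ⟨x, hmem, hx⟩, hmem'.2⟩
      · left; exact h
    · rintro (rfl | ⟨hji, hne, hyj⟩)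
      · exact ⟨le_refl _, hx⟩
      · refine ⟨le_of_lt hji, ?_⟩
        rw [hR j]
        exact ⟨I_subset hR hmono (le_of_lt hji) hne hxI.1, hyj⟩
  have hXeq : {x ∈ R i |
        n ≤ (Finset.univ.filter fun j : Fin N => j ≤ i ∧ x ∈ R j).card} =
      dInt (a i).1 (a i).2 ×ˢ {y ∈ dInt (b i).1 (b i).2 |
        n - 1 ≤ (Finset.univ.filter fun l : Fin N =>
          l < i ∧ (R l ∩ R i).Nonempty ∧ y ∈ dInt (b l).1 (b l).2).card} := by
    ext x
    simp only [Set.mem_sep_iff, Set.mem_prod]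
    constructor
    · rintro ⟨hxR, hcard⟩
      have hxI : x.1 ∈ dInt (a i).1 (a i).2 ∧ x.2 ∈ dInt (b i).1 (b i).2 := by
        rw [hR i] at hxR; exact hxR
      refine ⟨hxI.1, hxI.2, ?_⟩
      rw [hfil x hxR, Finset.card_insert_of_notMem (by
        simp only [Finset.mem_filter]
        rintro ⟨-, hii, -⟩
        exact absurd hii (lt_irrefl _))] at hcard
      omega
    · rintro ⟨hxI, hyJ, hc⟩
      have hxR : x ∈ R i := by rw [hR i]; exact ⟨hxI, hyJ⟩
      refine ⟨hxR, ?_⟩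
      rw [hfil x hxR, Finset.card_insert_of_notMem (by
        simp only [Finset.mem_filter]
        rintro ⟨-, hii, -⟩
        exact absurd hii (lt_irrefl _))]
      omega
  have hvolprod : ∀ (s t : Set ℝ), volume (s ×ˢ t) = volume s * volume t := fun s t => by
    rw [MeasureTheory.Measure.volume_eq_prod, MeasureTheory.Measure.prod_prod]
  rw [hXeq, hvolprod]
  refine le_trans (mul_le_mul_right hkey _) ?_
  rw [hR i, hvolprod]
  have hexp : (3 : ℝ≥0∞) ^ (-((n-1 : ℕ):ℤ)) = (3 : ℝ≥0∞) ^ (1 - (n:ℤ)) := by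
    congr 1
    omega
  rw [← hexp]
  exact le_of_eq (by ring)
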